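/- For every p ∈ [1, ∞), m, n ∈ ℕ, S ⊆ [n] and f : ℤ_{8m}^n → ℝ, ( (1/(8m)^n) Σ_{x ∈ ℤ_{8m}^n} |f(x) − T_S f(x)|^p )^{1/p} ≤ 2·( (1/(16m)^n) Σ_{ε ∈ {−1,1}^n} Σ_{x ∈ ℤ_{8m}^n} |f(x + ε) − f(x)|^p )^{1/p}. -/

import Mathlib

open Finset

noncomputable def smoothT {m n : ℕ} [NeZero (8 * m)] (S : Finset (Fin n))
    (f : (Fin n → ZMod (8 * m)) → ℝ) : (Fin n → ZMod (8 * m)) → ℝ :=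
  fun x => (∑ δ : Fin n → Bool,
    f (x + fun j => if j ∈ S then 2 * (if δ j then (1 : ZMod (8 * m)) else -1) else 0)) / 2 ^ n

section Aux

variable {m n : ℕ} [NeZero (8 * m)] (S : Finset (Fin n)) (f : (Fin n → ZMod (8 * m)) → ℝ)

/-- `ε` as a `±1` vector. -/
def pmVec (ε : Fin n → Bool) : Fin n → ZMod (8 * m) :=
  fun j => if ε j then 1 else -1

/-- flip coordinates outside `S`. -/
def flipOut (δ : Fin n → Bool) : Fin n → Bool :=
  fun j => if j ∈ S then δ j else !(δ j)

lemma flipOut_involutive : Function.Involutive (flipOut S) := by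
  intro δ
  funext j
  simp only [flipOut]
  by_cases h : j ∈ S <;> simp [h]

lemma pmVec_add_flip (δ : Fin n → Bool) :
    pmVec (m := m) δ + pmVec (flipOut S δ)
      = fun j => if j ∈ S then 2 * (if δ j then (1 : ZMod (8 * m)) else -1) else 0 := by
  funext j
  simp only [pmVec, flipOut, Pi.add_apply]
  by_cases h : j ∈ S
  · by_cases hd : δ j <;> simp [h, hd] <;> ring
  · by_cases hd : δ j <;> simp [h, hd]

end Aux

/-- **Lemma 2.1**: for every `p ∈ [1,∞)`, `m, n ∈ ℕ`, `S ⊆ [n]` and `f : ℤ_{8m}^n → ℝ`,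
`((1/(8m)^n) Σ_x |f(x) - T_S f(x)|^p)^{1/p}
  ≤ 2 ((1/(16m)^n) Σ_ε Σ_x |f(x+ε) - f(x)|^p)^{1/p}`. -/
theorem smoothT_close_to_identity (p : ℝ) (hp : 1 ≤ p) (m n : ℕ) [NeZero (8 * m)]
    (S : Finset (Fin n)) (f : (Fin n → ZMod (8 * m)) → ℝ) :
    ((∑ x : Fin n → ZMod (8 * m), |f x - smoothT S f x| ^ p) / (8 * m : ℝ) ^ n) ^ (1 / p) ≤
      2 * ((∑ ε : Fin n → Bool, ∑ x : Fin n → ZMod (8 * m),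
          |f (x + fun j => if ε j then (1 : ZMod (8 * m)) else -1) - f x| ^ p) /
        (16 * m : ℝ) ^ n) ^ (1 / p) := by
  classical
  have hp0 : 0 < p := one_pos.trans_le hp
  have hm0 : m ≠ 0 := by
    rintro rfl
    exact NeZero.ne (8 * 0) (by norm_num)
  have hmR : (0:ℝ) < m := by
    exact_mod_cast Nat.pos_of_ne_zero hm0
  -- notation
  set E : ℝ := ∑ ε : Fin n → Bool, ∑ x : Fin n → ZMod (8 * m),
      |f (x + fun j => if ε j then (1 : ZMod (8 * m)) else -1) - f x| ^ p with hE
  have hEnonneg : 0 ≤ E := by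
    apply Finset.sum_nonneg; intro ε _
    apply Finset.sum_nonneg; intro x _
    positivity
  -- the per-term function in the Jensen step
  set g : (Fin n → ZMod (8 * m)) → ((Fin n → Bool) × Bool) → ℝ := fun x q =>
    if q.2 then 2 * (f (x + pmVec q.1) - f (x + pmVec q.1 + pmVec (flipOut S q.1)))
    else 2 * (f x - f (x + pmVec q.1)) with hg
  -- step 0: f x - smoothT S f x is the average of g x
  have havg : ∀ x, f x - smoothT S f x
      = ∑ q : (Fin n → Bool) × Bool, ((2:ℝ) ^ (n+1))⁻¹ * g x q := by
    intro x
    rw [← Finset.mul_sum]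
    rw [Fintype.sum_prod_type]
    have : ∀ δ : Fin n → Bool, (∑ b : Bool, g x (δ, b))
        = 2 * (f x - f (x + fun j => if j ∈ S then 2 * (if δ j then (1 : ZMod (8 * m)) else -1) else 0)) := by
      intro δ
      rw [Fintype.sum_bool]
      simp only [hg, reduceIte, Bool.false_eq_true, if_false]
      rw [← pmVec_add_flip S δ, ← add_assoc]
      ring
    simp only [this]
    rw [← Finset.mul_sum, Finset.sum_sub_distrib, Finset.sum_const]
    simp only [Finset.card_univ, Fintype.card_pi, Fintype.card_bool,
      Finset.prod_const, Finset.card_fin, nsmul_eq_mul]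
    rw [smoothT, pow_succ]
    have h2n : (0:ℝ) < 2 ^ n := by positivity
    field_simp
    simp [Fintype.card_fin]
  -- Jensen: pointwise bound
  have hcard : ∑ _q : (Fin n → Bool) × Bool, ((2:ℝ) ^ (n+1))⁻¹ = 1 := by
    rw [Finset.sum_const, Finset.card_univ]
    simp only [Fintype.card_prod, Fintype.card_bool, Fintype.card_pi, Finset.prod_const,
      Finset.card_fin, nsmul_eq_mul]
    push_cast
    rw [pow_succ]
    field_simp
  have hJ : ∀ x, |f x - smoothT S f x| ^ p
      ≤ ∑ q : (Fin n → Bool) × Bool, ((2:ℝ) ^ (n+1))⁻¹ * |g x q| ^ p := by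
    intro x
    have h1 : |f x - smoothT S f x| ≤ ∑ q : (Fin n → Bool) × Bool, ((2:ℝ)^(n+1))⁻¹ * |g x q| := by
      rw [havg x]
      refine (Finset.abs_sum_le_sum_abs _ _).trans (le_of_eq ?_)
      refine Finset.sum_congr rfl fun q _ => ?_
      rw [abs_mul, abs_of_nonneg (by positivity : (0:ℝ) ≤ ((2:ℝ)^(n+1))⁻¹)]
    calc |f x - smoothT S f x| ^ p
        ≤ (∑ q : (Fin n → Bool) × Bool, ((2:ℝ)^(n+1))⁻¹ * |g x q|) ^ p :=
          Real.rpow_le_rpow (abs_nonneg _) h1 hp0.le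
      _ ≤ ∑ q : (Fin n → Bool) × Bool, ((2:ℝ)^(n+1))⁻¹ * |g x q| ^ p :=
          Real.rpow_arith_mean_le_arith_mean_rpow Finset.univ _ _
            (fun q _ => by positivity) hcard (fun q _ => abs_nonneg _) hp
  -- auxiliary computations
  have habs : ∀ (a b : ℝ), |2 * (a - b)| ^ p = 2^p * |b - a| ^ p := by
    intro a b
    rw [abs_mul, abs_two, abs_sub_comm, Real.mul_rpow (by norm_num) (abs_nonneg _)]
  have hshift : ∀ (u w : Fin n → ZMod (8*m)),
      (∑ x : Fin n → ZMod (8 * m), |f (x + u + w) - f (x + u)| ^ p)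
        = ∑ x : Fin n → ZMod (8 * m), |f (x + w) - f x| ^ p := by
    intro u w
    exact Fintype.sum_equiv (Equiv.addRight u) _ _ (fun x => rfl)
  have hE' : E = ∑ ε : Fin n → Bool, ∑ x : Fin n → ZMod (8 * m),
      |f (x + pmVec ε) - f x| ^ p := by
    rw [hE]
    refine Finset.sum_congr rfl fun ε _ => ?_
    rfl
  have hflip : (∑ δ : Fin n → Bool, ∑ x : Fin n → ZMod (8 * m),
        |f (x + pmVec (flipOut S δ)) - f x| ^ p)
      = ∑ ε : Fin n → Bool, ∑ x : Fin n → ZMod (8 * m), |f (x + pmVec ε) - f x| ^ p :=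
    Fintype.sum_equiv (Function.Involutive.toPerm _ (flipOut_involutive S)) _ _ (fun δ => rfl)
  -- total sum of |g|^p
  have hq : (∑ q : (Fin n → Bool) × Bool, ∑ x : Fin n → ZMod (8 * m), |g x q| ^ p)
      = 2^p * (2 * E) := by
    rw [Fintype.sum_prod_type]
    have hval : ∀ δ : Fin n → Bool, (∑ b : Bool, ∑ x : Fin n → ZMod (8 * m), |g x (δ, b)| ^ p)
        = 2^p * (∑ x : Fin n → ZMod (8 * m), |f (x + pmVec (flipOut S δ)) - f x| ^ p)
          + 2^p * (∑ x : Fin n → ZMod (8 * m), |f (x + pmVec δ) - f x| ^ p) := by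
      intro δ
      rw [Fintype.sum_bool]
      simp only [hg, reduceIte, Bool.false_eq_true, if_false]
      congr 1
      · rw [Finset.sum_congr rfl (fun x _ => habs _ _), ← Finset.mul_sum,
          hshift (pmVec δ) (pmVec (flipOut S δ))]
      · rw [Finset.sum_congr rfl (fun x _ => habs _ _), ← Finset.mul_sum]
    rw [Finset.sum_congr rfl (fun δ _ => hval δ), Finset.sum_add_distrib,
      ← Finset.mul_sum, ← Finset.mul_sum, hflip, ← hE']
    ring
  -- summed bound
  have hsum : (∑ x : Fin n → ZMod (8 * m), |f x - smoothT S f x| ^ p)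
      ≤ (2:ℝ)^p * E / 2^n := by
    calc (∑ x : Fin n → ZMod (8 * m), |f x - smoothT S f x| ^ p)
        ≤ ∑ x : Fin n → ZMod (8 * m), ∑ q : (Fin n → Bool) × Bool,
            ((2:ℝ) ^ (n+1))⁻¹ * |g x q| ^ p := Finset.sum_le_sum (fun x _ => hJ x)
      _ = ((2:ℝ) ^ (n+1))⁻¹ * ∑ q : (Fin n → Bool) × Bool,
            ∑ x : Fin n → ZMod (8 * m), |g x q| ^ p := by
          rw [Finset.sum_comm]
          simp only [← Finset.mul_sum]
      _ = (2:ℝ)^p * E / 2^n := by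
          rw [hq, pow_succ]
          field_simp
  -- final arithmetic
  have h8 : (0:ℝ) < (8 * (m:ℝ)) ^ n := by positivity
  have h16 : ((16 * (m:ℝ)) ^ n) = 2^n * (8 * (m:ℝ))^n := by
    rw [← mul_pow]; ring_nf
  have hstep : (∑ x : Fin n → ZMod (8 * m), |f x - smoothT S f x| ^ p) / (8 * (m:ℝ)) ^ n
      ≤ (2:ℝ)^p * (E / (16 * (m:ℝ)) ^ n) := by
    rw [div_le_iff₀ h8, h16]
    have h2n : (0:ℝ) < 2^n := by positivity
    calc (∑ x : Fin n → ZMod (8 * m), |f x - smoothT S f x| ^ p)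
        ≤ (2:ℝ)^p * E / 2^n := hsum
      _ = 2^p * (E / (2^n * (8 * (m:ℝ))^n)) * (8 * (m:ℝ))^n := by field_simp
  have hB : (0:ℝ) ≤ E / (16 * (m:ℝ)) ^ n := by positivity
  calc ((∑ x : Fin n → ZMod (8 * m), |f x - smoothT S f x| ^ p) / (8 * (m:ℝ)) ^ n) ^ (1/p)
      ≤ ((2:ℝ)^p * (E / (16 * (m:ℝ)) ^ n)) ^ (1/p) :=
        Real.rpow_le_rpow (by positivity) hstep (by positivity)
    _ = 2 * (E / (16 * (m:ℝ)) ^ n) ^ (1/p) := by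
        rw [Real.mul_rpow (by positivity) hB, ← Real.rpow_mul (by norm_num : (0:ℝ) ≤ 2),
          mul_one_div_cancel hp0.ne', Real.rpow_one]
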